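/- Let R be a commutative Noetherian ring, σ a finite type, m a monomial order on σ →₀ ℕ, and I an ideal of MvPolynomial σ R. Then the set of terms appearing in minimal head monomials of I, namely {t : σ →₀ ℕ | ∃ c : R, (c,t) ∈ MinMon(HD(I))}, is finite. -/

import Mathlib

open MvPolynomial

/-- Head term of a polynomial with respect to a monomial order. -/
noncomputable def MonomialOrder.degree' {σ R : Type*} [CommSemiring R] (m : MonomialOrder σ)
    (p : MvPolynomial σ R) : σ →₀ ℕ :=
  m.toSyn.symm (p.support.sup fun s => m.toSyn s)

/-- Head coefficient of a polynomial with respect to a monomial order. -/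
noncomputable def MonomialOrder.leadCoeff {σ R : Type*} [CommSemiring R] (m : MonomialOrder σ)
    (p : MvPolynomial σ R) : R :=
  p.coeff (m.degree' p)

/-- The set of head monomials of an ideal, as pairs (coefficient, term). -/
def HD {σ R : Type*} [CommRing R] (m : MonomialOrder σ) (I : Ideal (MvPolynomial σ R)) :
    Set (R × (σ →₀ ℕ)) :=
  {ct | ∃ p ∈ I, p ≠ 0 ∧ m.degree' p = ct.2 ∧ m.leadCoeff p = ct.1}

/-- Divisibility of monomials, represented as pairs (coefficient, term). -/
def MonDvd {σ R : Type*} [CommRing R] (a b : R × (σ →₀ ℕ)) : Prop :=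
  a.1 ∣ b.1 ∧ a.2 ≤ b.2

/-- The divisibility-minimal monomials of a set of monomials: those not strictly divided
by any monomial of the set. -/
def MinMon {σ R : Type*} [CommRing R] (S : Set (R × (σ →₀ ℕ))) : Set (R × (σ →₀ ℕ)) :=
  {a ∈ S | ¬ ∃ b ∈ S, MonDvd b a ∧ ¬ MonDvd a b}

section Aux

variable {σ R : Type*} [CommRing R] (m : MonomialOrder σ)

lemma aux_le_degree {p : MvPolynomial σ R} {s : σ →₀ ℕ} (hs : s ∈ p.support) :
    m.toSyn s ≤ m.toSyn (m.degree' p) := by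
  rw [MonomialOrder.degree', AddEquiv.apply_symm_apply]
  exact Finset.le_sup hs

lemma aux_degree_eq {p : MvPolynomial σ R} {t : σ →₀ ℕ} (ht : p.coeff t ≠ 0)
    (h : ∀ s ∈ p.support, m.toSyn s ≤ m.toSyn t) : m.degree' p = t := by
  apply m.toSyn.injective
  apply le_antisymm
  · rw [MonomialOrder.degree', AddEquiv.apply_symm_apply]
    exact Finset.sup_le h
  · exact aux_le_degree m (MvPolynomial.mem_support_iff.mpr ht)

lemma aux_degree_mem_support {p : MvPolynomial σ R} (hp : p ≠ 0) :
    m.degree' p ∈ p.support := by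
  obtain ⟨b, hb, he⟩ := Finset.exists_mem_eq_sup p.support
    (MvPolynomial.support_nonempty.mpr hp) (fun s => m.toSyn s)
  rw [MonomialOrder.degree', he, AddEquiv.symm_apply_apply]
  exact hb

lemma aux_leadCoeff_ne_zero {p : MvPolynomial σ R} (hp : p ≠ 0) :
    m.leadCoeff p ≠ 0 :=
  MvPolynomial.mem_support_iff.mp (aux_degree_mem_support m hp)

/-- `HD` is upward-closed in the term: multiply by a monomial. -/
lemma aux_HD_mono {I : Ideal (MvPolynomial σ R)} {c : R} {t t' : σ →₀ ℕ}
    (h : (c, t) ∈ HD m I) (htt' : t ≤ t') : (c, t') ∈ HD m I := by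
  obtain ⟨p, hpI, hp0, hdeg', hlc'⟩ := h
  have hdeg : m.degree' p = t := hdeg'
  have hlc : m.leadCoeff p = c := hlc'
  have hc : c ≠ 0 := hlc ▸ aux_leadCoeff_ne_zero m hp0
  have hcoeffp : p.coeff t = c := by
    rw [← hlc, MonomialOrder.leadCoeff, hdeg]
  set d := t' - t with hd
  have hdt' : d ≤ t' := tsub_le_self
  have hdadd : d + t = t' := tsub_add_cancel_of_le htt'
  set q := MvPolynomial.monomial d (1 : R) * p with hq
  have hcoeffq : q.coeff t' = c := by
    rw [hq, MvPolynomial.coeff_monomial_mul', if_pos hdt', one_mul,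
      tsub_tsub_cancel_of_le htt', hcoeffp]
  have hq0 : q ≠ 0 := fun h => hc (by rw [← hcoeffq, h, MvPolynomial.coeff_zero])
  have hdegq : m.degree' q = t' := by
    apply aux_degree_eq m (hcoeffq ▸ hc)
    intro s hs
    have hcs : q.coeff s ≠ 0 := MvPolynomial.mem_support_iff.mp hs
    rw [hq, MvPolynomial.coeff_monomial_mul'] at hcs
    by_cases hds : d ≤ s
    · rw [if_pos hds, one_mul] at hcs
      have hmem : s - d ∈ p.support := MvPolynomial.mem_support_iff.mpr hcs
      have h1 : m.toSyn (s - d) ≤ m.toSyn t := hdeg ▸ aux_le_degree m hmem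
      calc m.toSyn s = m.toSyn (d + (s - d)) := by rw [add_tsub_cancel_of_le hds]
        _ = m.toSyn d + m.toSyn (s - d) := map_add _ _ _
        _ ≤ m.toSyn d + m.toSyn t := add_le_add le_rfl h1
        _ = m.toSyn (d + t) := (map_add _ _ _).symm
        _ = m.toSyn t' := by rw [hdadd]
    · rw [if_neg hds] at hcs
      exact absurd rfl hcs
  exact ⟨q, I.mul_mem_left _ hpI, hq0, hdegq, by
    rw [MonomialOrder.leadCoeff, hdegq, hcoeffq]⟩

/-- The ideal of lead coefficients at a given term. -/
def coeffIdeal (I : Ideal (MvPolynomial σ R)) (t : σ →₀ ℕ) : Ideal R where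
  carrier := {c | c = 0 ∨ (c, t) ∈ HD m I}
  zero_mem' := Or.inl rfl
  add_mem' := by
    classical
    rintro a b (rfl | ⟨p, hpI, hp0, hdp', hlp'⟩) hb
    · simpa using hb
    have hdp : m.degree' p = t := hdp'
    have hlp : m.leadCoeff p = a := hlp'
    rcases hb with rfl | ⟨q, hqI, hq0, hdq', hlq'⟩
    · simpa using Or.inr ⟨p, hpI, hp0, hdp', hlp'⟩
    have hdq : m.degree' q = t := hdq'
    have hlq : m.leadCoeff q = b := hlq'
    by_cases hab : a + b = 0
    · exact Or.inl hab
    refine Or.inr ⟨p + q, I.add_mem hpI hqI, ?_, ?_, ?_⟩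
    · intro h
      apply hab
      have : (p + q).coeff t = a + b := by
        rw [MvPolynomial.coeff_add, ← hlp, ← hlq, MonomialOrder.leadCoeff,
          MonomialOrder.leadCoeff, hdp, hdq]
      rw [← this, h, MvPolynomial.coeff_zero]
    all_goals {
      have hcoeff : (p + q).coeff t = a + b := by
        rw [MvPolynomial.coeff_add, ← hlp, ← hlq, MonomialOrder.leadCoeff,
          MonomialOrder.leadCoeff, hdp, hdq]
      have hdeg : m.degree' (p + q) = t := by
        apply aux_degree_eq m (hcoeff ▸ hab)
        intro s hs
        rcases Finset.mem_union.mp (MvPolynomial.support_add hs) with h | h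
        · exact hdp ▸ aux_le_degree m h
        · exact hdq ▸ aux_le_degree m h
      simp only [hdeg, MonomialOrder.leadCoeff, hcoeff]
    }
  smul_mem' := by
    rintro r a (rfl | ⟨p, hpI, hp0, hdp', hlp'⟩)
    · exact Or.inl (by simp)
    have hdp : m.degree' p = t := hdp'
    have hlp : m.leadCoeff p = a := hlp'
    by_cases hra : r • a = 0
    · exact Or.inl hra
    have hrpI : r • p ∈ I := by
      rw [MvPolynomial.smul_eq_C_mul]; exact I.mul_mem_left _ hpI
    refine Or.inr ⟨r • p, hrpI, ?_, ?_, ?_⟩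
    · intro h
      apply hra
      have : (r • p).coeff t = r • a := by
        rw [MvPolynomial.coeff_smul, ← hlp, MonomialOrder.leadCoeff, hdp]
      rw [← this, h, MvPolynomial.coeff_zero]
    all_goals {
      have hcoeff : (r • p).coeff t = r • a := by
        rw [MvPolynomial.coeff_smul, ← hlp, MonomialOrder.leadCoeff, hdp]
      have hdeg : m.degree' (r • p) = t := by
        apply aux_degree_eq m (hcoeff ▸ hra)
        intro s hs
        exact hdp ▸ aux_le_degree m (MvPolynomial.support_smul hs)
      simp only [hdeg, MonomialOrder.leadCoeff, hcoeff]
    }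

lemma coeffIdeal_mono (I : Ideal (MvPolynomial σ R)) {t t' : σ →₀ ℕ} (h : t ≤ t') :
    coeffIdeal m I t ≤ coeffIdeal m I t' := by
  rintro c (rfl | hc)
  · exact Or.inl rfl
  · exact Or.inr (aux_HD_mono m hc h)

end Aux

/-- The set of terms appearing in minimal head monomials of an ideal is finite. -/
theorem minMon_terms_finite {σ R : Type*} [CommRing R] [IsNoetherianRing R] [Finite σ]
    (m : MonomialOrder σ) (I : Ideal (MvPolynomial σ R)) :
    {t : σ →₀ ℕ | ∃ c : R, (c, t) ∈ MinMon (HD m I)}.Finite := by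
  by_contra h
  have h : {t : σ →₀ ℕ | ∃ c : R, (c, t) ∈ MinMon (HD m I)}.Infinite := h
  let f := h.natEmbedding
  obtain ⟨g, hg⟩ := (Set.isPWO_of_wellQuasiOrderedLE (Set.univ : Set (σ →₀ ℕ))).exists_monotone_subseq
    (f := fun n => ((f n : _) : σ →₀ ℕ)) (fun _ => Set.mem_univ _)
  have hinj : Function.Injective fun n => ((f (g n) : _) : σ →₀ ℕ) := by
    intro a b hab
    exact g.injective (f.injective (Subtype.ext hab))
  let chain : ℕ →o Ideal R :=
    ⟨fun n => coeffIdeal m I ((f (g n) : _) : σ →₀ ℕ),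
     fun a b hab => coeffIdeal_mono m I (hg hab)⟩
  obtain ⟨n, hn⟩ := monotone_stabilizes_iff_noetherian.mpr
    (inferInstance : IsNoetherian R R) chain
  set ti : σ →₀ ℕ := ((f (g n) : _) : σ →₀ ℕ) with hti
  set tj : σ →₀ ℕ := ((f (g (n + 1)) : _) : σ →₀ ℕ) with htj
  have hle : ti ≤ tj := hg (Nat.le_succ n)
  have hne : ti ≠ tj := fun h => by simpa using hinj h
  obtain ⟨c, hcHD, hcmin⟩ := (f (g (n + 1))).2
  have hc0 : c ≠ 0 := by
    obtain ⟨p, _, hp0, _, hlc⟩ := hcHD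
    have hlc' : m.leadCoeff p = c := hlc
    exact hlc' ▸ aux_leadCoeff_ne_zero m hp0
  have hcJ : c ∈ coeffIdeal m I tj := Or.inr hcHD
  have hcJi : c ∈ coeffIdeal m I ti := by
    have heq : coeffIdeal m I ti = coeffIdeal m I tj :=
      congrArg (fun J : Ideal R => J) (hn (n + 1) (Nat.le_succ n))
    exact heq ▸ hcJ
  have hcHDi : (c, ti) ∈ HD m I := hcJi.resolve_left hc0
  exact hcmin ⟨(c, ti), hcHDi, ⟨dvd_refl c, hle⟩,
    fun hd => hne (le_antisymm hle hd.2)⟩
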